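/- Let H be a Hilbert space, A a closed operator with domains D_min ⊆ D_max as above, and A* its formal adjoint with domains D_min(A*) ⊆ D_max(A*). Let E_max(A) = D_max ∩ ker(A*A + I) be the (·,·)_A-orthogonal of D_min in D_max, and define E_max(A*) analogously. Then for u ∈ E_max(A), Au ∈ E_max(A*), and the map u ↦ Au is an isometry from (E_max(A), (·,·)_A) to (E_max(A*), (·,·)_{A*}). Moreover, for u ∈ E_max(A) and v ∈ D_max(A*), (Au, v)_{A*} = (Au, v) − (u, A*v). -/
import Mathlib


open scoped ComplexInnerProductSpace

/-- If `u ∈ E_max(A) = D_max(A) ∩ ker(A*A + I)` (so `Au ∈ D_max(A*)` and `A*Au = −u`), then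
`Au ∈ E_max(A*) = D_max(A*) ∩ ker(AA* + I)`, the map `u ↦ Au` is an isometry for the graph
inner products, and `(Au, v)_{A*} = (Au, v) − (u, A*v)` for all `v ∈ D_max(A*)`. -/
theorem stmt_12 {H : Type*} [NormedAddCommGroup H] [InnerProductSpace ℂ H] [CompleteSpace H]
    (Dmax DmaxS : Submodule ℂ H) (A : ↥Dmax →ₗ[ℂ] H) (As : ↥DmaxS →ₗ[ℂ] H)
    (Dmin : Submodule ℂ ↥Dmax) (DminS : Submodule ℂ ↥DmaxS)
    -- u ∈ E_max(A): A u ∈ D_max(A*) and A*(A u) = −u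
    (u : ↥Dmax) (hAu : A u ∈ DmaxS) (hk : As ⟨A u, hAu⟩ = -(u : H)) :
    -- (i) A u ∈ E_max(A*): A*(A u) ∈ D_max(A) and A(A*(A u)) = −A u
    (∃ h2 : As ⟨A u, hAu⟩ ∈ Dmax, A ⟨As ⟨A u, hAu⟩, h2⟩ = -(A u)) ∧
    -- (i') u ↦ A u is an isometry from E_max(A) to E_max(A*) for the graph inner products
    (∀ (v : ↥Dmax) (hAv : A v ∈ DmaxS), As ⟨A v, hAv⟩ = -(v : H) →
      ⟪As ⟨A u, hAu⟩, As ⟨A v, hAv⟩⟫ + ⟪A u, A v⟫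
        = ⟪A u, A v⟫ + ⟪(u : H), (v : H)⟫) ∧
    -- (ii) (A u, v)_{A*} = (A u, v) − (u, A* v) for all v ∈ D_max(A*)
    (∀ v : ↥DmaxS,
      ⟪As ⟨A u, hAu⟩, As v⟫ + ⟪A u, (v : H)⟫
        = ⟪A u, (v : H)⟫ - ⟪(u : H), As v⟫) := by
  refine ⟨⟨?_, ?_⟩, ?_, ?_⟩
  · rw [hk]; exact neg_mem u.2
  · have : (⟨As ⟨A u, hAu⟩, by rw [hk]; exact neg_mem u.2⟩ : ↥Dmax) = -u := by
      ext; simp [hk]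
    rw [this, map_neg]
  · intro v hAv hkv
    rw [hk, hkv, inner_neg_neg]; ring
  · intro v
    rw [hk, inner_neg_left]
    ring
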